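/- In the chain-of-triangles gadget with published weights w', the minimum cost of an attack making p* (the bottom chain) the shortest s–t path equals ∑_{i∈Y} ν_i, where Y = {i : w'({u_{i-1},u_i}) ≥ w'({u_{i-1},ω_i}) + w'({ω_i,u_i})}. -/

import Mathlib

open SimpleGraph

/-- Length of a walk with respect to edge weights `w`. -/
noncomputable def walkLen {V : Type*} {G : SimpleGraph V} (w : Sym2 V → ℝ) {s t : V}
    (p : G.Walk s t) : ℝ := (p.edges.map w).sum

/-- Vertices of the chain-of-triangles gadget: `Sum.inl i` is `u_i`, `Sum.inr i` is `ω_{i+1}`. -/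
abbrev CV (n : ℕ) := Fin (n + 1) ⊕ Fin n

/-- The bottom edge `{u_{i-1}, u_i}` of the `i`-th triangle (on the target path). -/
def botE (n : ℕ) (i : Fin n) : Sym2 (CV n) := s(Sum.inl i.castSucc, Sum.inl i.succ)

/-- The detour edge `{u_{i-1}, ω_i}` of the `i`-th triangle. -/
def d1E (n : ℕ) (i : Fin n) : Sym2 (CV n) := s(Sum.inl i.castSucc, Sum.inr i)

/-- The detour edge `{ω_i, u_i}` of the `i`-th triangle. -/
def d2E (n : ℕ) (i : Fin n) : Sym2 (CV n) := s(Sum.inr i, Sum.inl i.succ)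

/-- The chain-of-triangles gadget graph. -/
def chainGraph (n : ℕ) : SimpleGraph (CV n) :=
  SimpleGraph.fromEdgeSet {e | ∃ i : Fin n, e = botE n i ∨ e = d1E n i ∨ e = d2E n i}

/-- Source `s = u_0`. -/
def src (n : ℕ) : CV n := Sum.inl 0

/-- Destination `t = u_n`. -/
def dst (n : ℕ) : CV n := Sum.inl (Fin.last n)

/-- An attack on the chain gadget: removable edges lie in the graph, no bottom edge
(edge of `p*`) is removed, and afterwards every simple `s`–`t` path other than the bottom
path `p*` (i.e. any path visiting some detour vertex `ω_i`) is strictly longer than `p*`. -/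
def IsChainAttack (n : ℕ) (w' : Sym2 (CV n) → ℝ) (E' : Finset (Sym2 (CV n))) : Prop :=
  ↑E' ⊆ (chainGraph n).edgeSet ∧ (∀ i : Fin n, botE n i ∉ E') ∧
    ∀ q : ((chainGraph n).deleteEdges ↑E').Walk (src n) (dst n), q.IsPath →
      (∃ i : Fin n, Sum.inr i ∈ q.support) →
      ∑ i : Fin n, w' (botE n i) < walkLen w' q

namespace ChainAux
variable {n : ℕ}

@[simp] lemma walkLen_nil {V : Type*} {G : SimpleGraph V} (w : Sym2 V → ℝ) {u : V} :
    walkLen w (Walk.nil : G.Walk u u) = 0 := by simp [walkLen]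

@[simp] lemma walkLen_cons {V : Type*} {G : SimpleGraph V} (w : Sym2 V → ℝ) {u v x : V}
    (h : G.Adj u v) (p : G.Walk v x) :
    walkLen w (Walk.cons h p) = w s(u, v) + walkLen w p := by simp [walkLen]

@[simp] lemma walkLen_copy {V : Type*} {G : SimpleGraph V} (w : Sym2 V → ℝ) {u v u' v' : V}
    (p : G.Walk u v) (h1 : u = u') (h2 : v = v') :
    walkLen w (p.copy h1 h2) = walkLen w p := by subst h1 h2; rfl

@[simp] lemma walkLen_append {V : Type*} {G : SimpleGraph V} (w : Sym2 V → ℝ) {u v x : V}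
    (p : G.Walk u v) (q : G.Walk v x) :
    walkLen w (p.append q) = walkLen w p + walkLen w q := by
  simp [walkLen, Walk.edges_append]

lemma cut_lemma {V : Type*} {G : SimpleGraph V} (S : Set V) {a b : V} (q : G.Walk a b)
    (ha : a ∈ S) (hb : b ∉ S) : ∃ x y, x ∈ S ∧ y ∉ S ∧ s(x, y) ∈ q.edges := by
  induction q with
  | nil => exact absurd ha hb
  | @cons u v x h p ih =>
    by_cases hv : v ∈ S
    · obtain ⟨x', y', h1, h2, h3⟩ := ih hv hb
      exact ⟨x', y', h1, h2, List.mem_cons_of_mem _ h3⟩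
    · exact ⟨u, v, ha, hv, by simp⟩


lemma botE_inj {i j : Fin n} (h : botE n i = botE n j) : i = j := by
  simp only [botE, Sym2.eq_iff, Sum.inl.injEq, Fin.ext_iff, Fin.coe_castSucc, Fin.val_succ] at h
  rcases h with ⟨h1, h2⟩ | ⟨h1, h2⟩ <;> exact Fin.ext (by omega)

lemma d1E_inj {i j : Fin n} (h : d1E n i = d1E n j) : i = j := by
  simp only [d1E, Sym2.eq_iff, Sum.inl.injEq, Sum.inr.injEq, Fin.ext_iff, Fin.coe_castSucc,
    reduceCtorEq, and_self, false_and, and_false, or_false, or_self] at h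
  exact Fin.ext (by omega)

lemma d2E_inj {i j : Fin n} (h : d2E n i = d2E n j) : i = j := by
  simp only [d2E, Sym2.eq_iff, Sum.inl.injEq, Sum.inr.injEq, Fin.ext_iff, Fin.val_succ,
    reduceCtorEq, and_self, false_and, and_false, or_false, or_self] at h
  exact Fin.ext (by omega)

lemma botE_ne_d1E {i j : Fin n} : botE n i ≠ d1E n j := by
  simp only [botE, d1E, Ne, Sym2.eq_iff, Sum.inl.injEq, reduceCtorEq, and_false, false_and,
    or_self, not_false_eq_true]

lemma botE_ne_d2E {i j : Fin n} : botE n i ≠ d2E n j := by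
  simp only [botE, d2E, Ne, Sym2.eq_iff, Sum.inl.injEq, reduceCtorEq, and_false, false_and,
    or_self, not_false_eq_true]

lemma d1E_ne_d2E {i j : Fin n} : d1E n i ≠ d2E n j := by
  intro h
  simp only [d1E, d2E, Sym2.eq_iff, Sum.inl.injEq, Sum.inr.injEq, Fin.ext_iff,
    Fin.coe_castSucc, Fin.val_succ, reduceCtorEq, and_false, false_and, false_or, and_true,
    true_and, or_false, or_self] at h
  rcases h with ⟨h1, h2⟩ <;> omega


lemma edge_cases {e : Sym2 (CV n)} (he : e ∈ (chainGraph n).edgeSet) :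
    ∃ i : Fin n, e = botE n i ∨ e = d1E n i ∨ e = d2E n i := by
  rw [chainGraph, edgeSet_fromEdgeSet] at he
  exact he.1

def rank : CV n → ℕ := Sum.elim (fun j => 2 * j.val) (fun j => 2 * j.val + 1)

@[simp] lemma rank_inl (j : Fin (n+1)) : rank (Sum.inl j : CV n) = 2 * j.val := rfl
@[simp] lemma rank_inr (j : Fin n) : rank (Sum.inr j : CV n) = 2 * j.val + 1 := rfl

lemma cross_bot_d1 {x y : CV n} (hxy : s(x, y) ∈ (chainGraph n).edgeSet) (i : Fin n)
    (hx : rank x ≤ 2 * i.val) (hy : 2 * i.val < rank y) :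
    s(x, y) = botE n i ∨ s(x, y) = d1E n i := by
  obtain ⟨j, hj | hj | hj⟩ := edge_cases hxy <;>
    [rw [botE, Sym2.eq_iff] at hj; rw [d1E, Sym2.eq_iff] at hj; rw [d2E, Sym2.eq_iff] at hj] <;>
    (rcases hj with ⟨rfl, rfl⟩ | ⟨rfl, rfl⟩ <;>
      simp only [rank_inl, rank_inr, Fin.coe_castSucc, Fin.val_succ] at hx hy <;>
      first
        | (have hji : j = i := Fin.ext (by omega); subst hji; exact Or.inl rfl)
        | (have hji : j = i := Fin.ext (by omega); subst hji; exact Or.inr rfl)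
        | exact absurd hx (by omega))

lemma cross_bot_d2 {x y : CV n} (hxy : s(x, y) ∈ (chainGraph n).edgeSet) (i : Fin n)
    (hx : rank x ≤ 2 * i.val + 1) (hy : 2 * i.val + 1 < rank y) :
    s(x, y) = botE n i ∨ s(x, y) = d2E n i := by
  obtain ⟨j, hj | hj | hj⟩ := edge_cases hxy <;>
    [rw [botE, Sym2.eq_iff] at hj; rw [d1E, Sym2.eq_iff] at hj; rw [d2E, Sym2.eq_iff] at hj] <;>
    (rcases hj with ⟨rfl, rfl⟩ | ⟨rfl, rfl⟩ <;>
      simp only [rank_inl, rank_inr, Fin.coe_castSucc, Fin.val_succ] at hx hy <;>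
      first
        | (have hji : j = i := Fin.ext (by omega); subst hji; exact Or.inl rfl)
        | (have hji : j = i := Fin.ext (by omega); subst hji; exact Or.inr rfl)
        | exact absurd hx (by omega))

lemma incident_classify {x : CV n} {j : Fin n}
    (h : s(x, Sum.inr j) ∈ (chainGraph n).edgeSet) :
    s(x, Sum.inr j) = d1E n j ∨ s(x, Sum.inr j) = d2E n j := by
  obtain ⟨i, hi | hi | hi⟩ := edge_cases h <;>
    [rw [botE, Sym2.eq_iff] at hi; rw [d1E, Sym2.eq_iff] at hi; rw [d2E, Sym2.eq_iff] at hi]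
  · rcases hi with ⟨-, h2⟩ | ⟨-, h2⟩ <;> exact absurd h2 (by simp)
  · rcases hi with ⟨rfl, h2⟩ | ⟨-, h2⟩
    · obtain rfl : i = j := by simpa [eq_comm] using h2
      exact Or.inl rfl
    · exact absurd h2 (by simp)
  · rcases hi with ⟨-, h2⟩ | ⟨rfl, h2⟩
    · exact absurd h2 (by simp)
    · obtain rfl : i = j := by simpa [eq_comm] using h2
      exact Or.inr Sym2.eq_swap

lemma bot_or_d1_mem {H : SimpleGraph (CV n)} (hH : H ≤ chainGraph n)
    (q : H.Walk (src n) (dst n)) (i : Fin n) :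
    botE n i ∈ q.edges ∨ d1E n i ∈ q.edges := by
  obtain ⟨x, y, hx, hy, hmem⟩ := cut_lemma {v : CV n | rank v ≤ 2 * i.val} q
    (by simp [src]) (by simp only [dst, Set.mem_setOf_eq, rank_inl, Fin.val_last]; omega)
  have hedge : s(x, y) ∈ (chainGraph n).edgeSet :=
    SimpleGraph.edgeSet_mono hH (q.edges_subset_edgeSet hmem)
  rcases cross_bot_d1 hedge i hx (by simpa using hy) with h | h
  · exact Or.inl (h ▸ hmem)
  · exact Or.inr (h ▸ hmem)

lemma bot_or_d2_mem {H : SimpleGraph (CV n)} (hH : H ≤ chainGraph n)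
    (q : H.Walk (src n) (dst n)) (i : Fin n) :
    botE n i ∈ q.edges ∨ d2E n i ∈ q.edges := by
  obtain ⟨x, y, hx, hy, hmem⟩ := cut_lemma {v : CV n | rank v ≤ 2 * i.val + 1} q
    (by simp [src]) (by simp only [dst, Set.mem_setOf_eq, rank_inl, Fin.val_last]; omega)
  have hedge : s(x, y) ∈ (chainGraph n).edgeSet :=
    SimpleGraph.edgeSet_mono hH (q.edges_subset_edgeSet hmem)
  rcases cross_bot_d2 hedge i hx (by simpa using hy) with h | h
  · exact Or.inl (h ▸ hmem)
  · exact Or.inr (h ▸ hmem)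

lemma d_edges_mem {H : SimpleGraph (CV n)} (hH : H ≤ chainGraph n)
    (q : H.Walk (src n) (dst n)) (hq : q.IsPath) {j : Fin n}
    (hj : Sum.inr j ∈ q.support) :
    d1E n j ∈ q.edges ∧ d2E n j ∈ q.edges := by
  classical
  set q1 := q.takeUntil _ hj with hq1
  set q2 := q.dropUntil _ hj with hq2
  have hsplit : q.edges = q1.edges ++ q2.edges := by
    rw [hq1, hq2, ← Walk.edges_append, Walk.take_spec]
  have hnd : (q1.edges ++ q2.edges).Nodup := hsplit ▸ hq.edges_nodup
  have hdisj := (List.nodup_append.mp hnd).2.2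
  obtain ⟨x, y, hx, hy, hmem1⟩ := cut_lemma {v : CV n | v ≠ Sum.inr j} q1
    (by simp [src]) (by simp)
  have hy' : y = Sum.inr j := by simpa using hy
  subst hy'
  have he1 : s(x, Sum.inr j) ∈ (chainGraph n).edgeSet :=
    SimpleGraph.edgeSet_mono hH (q1.edges_subset_edgeSet hmem1)
  obtain ⟨x', y', hx', hy'', hmem2⟩ := cut_lemma {v : CV n | v ≠ Sum.inr j} q2.reverse
    (by simp [dst]) (by simp)
  have hy2 : y' = Sum.inr j := by simpa using hy''
  subst hy2
  rw [Walk.edges_reverse, List.mem_reverse] at hmem2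
  have he2 : s(x', Sum.inr j) ∈ (chainGraph n).edgeSet :=
    SimpleGraph.edgeSet_mono hH (q2.edges_subset_edgeSet hmem2)
  have hne : s(x, Sum.inr j) ≠ s(x', Sum.inr j) := fun hcontra =>
    hdisj _ hmem1 _ hmem2 hcontra
  have hmem1' : s(x, Sum.inr j) ∈ q.edges := hsplit ▸ List.mem_append_left _ hmem1
  have hmem2' : s(x', Sum.inr j) ∈ q.edges := hsplit ▸ List.mem_append_right _ hmem2
  rcases incident_classify he1 with h1 | h1 <;> rcases incident_classify he2 with h2 | h2
  · exact absurd (h1.trans h2.symm) hne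
  · exact ⟨h1 ▸ hmem1', h2 ▸ hmem2'⟩
  · exact ⟨h2 ▸ hmem2', h1 ▸ hmem1'⟩
  · exact absurd (h1.trans h2.symm) hne

/-! ### explicit bottom-path segments -/

variable {H : SimpleGraph (CV n)}

def segAux (hH : ∀ a : ℕ, (h : a < n) → H.Adj (Sum.inl ⟨a, by omega⟩) (Sum.inl ⟨a + 1, by omega⟩)) :
    (k a : ℕ) → (h : a + k ≤ n) → H.Walk (Sum.inl ⟨a, by omega⟩) (Sum.inl ⟨a + k, by omega⟩)
  | 0, a, h => Walk.nil
  | k + 1, a, h =>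
    Walk.cons (hH a (by omega))
      ((segAux hH k (a + 1) (by omega)).copy rfl
        (by simp only [Sum.inl.injEq, Fin.mk.injEq]; omega))

def ew (w' : Sym2 (CV n) → ℝ) : ℕ → ℝ := fun a => if h : a < n then w' (botE n ⟨a, h⟩) else 0

lemma botE_mk (a : ℕ) (h : a < n) :
    botE n ⟨a, h⟩ = s(Sum.inl ⟨a, by omega⟩, Sum.inl ⟨a + 1, by omega⟩) := rfl

lemma walkLen_segAux (w' : Sym2 (CV n) → ℝ)
    (hH : ∀ a : ℕ, (h : a < n) → H.Adj (Sum.inl ⟨a, by omega⟩) (Sum.inl ⟨a + 1, by omega⟩))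
    (k : ℕ) : ∀ (a : ℕ) (h : a + k ≤ n),
    walkLen w' (segAux hH k a h) = ∑ j ∈ Finset.Ico a (a + k), ew w' j := by
  induction k with
  | zero => intro a h; simp [segAux]
  | succ k ih =>
    intro a h
    rw [Finset.sum_eq_sum_Ico_succ_bot (by omega)]
    simp only [segAux, walkLen_cons, walkLen_copy]
    rw [ih (a + 1) (by omega)]
    have hIco : Finset.Ico (a + 1) (a + 1 + k) = Finset.Ico (a + 1) (a + (k + 1)) := by
      congr 1
      omega
    rw [hIco]
    have hew : ew w' a = w' s(Sum.inl ⟨a, by omega⟩, Sum.inl ⟨a + 1, by omega⟩) := by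
      rw [ew, dif_pos (by omega : a < n)]
      rfl
    rw [hew]

lemma support_segAux_mem
    (hH : ∀ a : ℕ, (h : a < n) → H.Adj (Sum.inl ⟨a, by omega⟩) (Sum.inl ⟨a + 1, by omega⟩))
    (k : ℕ) : ∀ (a : ℕ) (h : a + k ≤ n) (x : CV n),
    x ∈ (segAux hH k a h).support ↔
      ∃ j : Fin (n + 1), a ≤ j.val ∧ j.val ≤ a + k ∧ x = Sum.inl j := by
  induction k with
  | zero =>
    intro a h x
    simp only [segAux, Walk.support_nil, List.mem_singleton]
    constructor
    · rintro rfl; exact ⟨⟨a, by omega⟩, Nat.le_refl a, Nat.le_refl a, rfl⟩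
    · rintro ⟨j, h1, h2, rfl⟩
      have : j = ⟨a, by omega⟩ := Fin.ext (show (j : ℕ) = a by omega)
      rw [this]
  | succ k ih =>
    intro a h x
    simp only [segAux, Walk.support_cons, Walk.support_copy, List.mem_cons, ih (a + 1) (by omega)]
    constructor
    · rintro (rfl | ⟨j, h1, h2, rfl⟩)
      · exact ⟨⟨a, by omega⟩, Nat.le_refl a, Nat.le_add_right a (k + 1), rfl⟩
      · exact ⟨j, by omega, by omega, rfl⟩
    · rintro ⟨j, h1, h2, rfl⟩
      by_cases hja : j.val = a
      · left
        have : j = ⟨a, by omega⟩ := Fin.ext (show (j : ℕ) = a by omega)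
        rw [this]
      · right
        exact ⟨j, by omega, by omega, rfl⟩

lemma isPath_segAux
    (hH : ∀ a : ℕ, (h : a < n) → H.Adj (Sum.inl ⟨a, by omega⟩) (Sum.inl ⟨a + 1, by omega⟩))
    (k : ℕ) : ∀ (a : ℕ) (h : a + k ≤ n), (segAux hH k a h).IsPath := by
  induction k with
  | zero => intro a h; simp [segAux]
  | succ k ih =>
    intro a h
    rw [segAux]
    apply Walk.IsPath.cons
    · simp only [Walk.isPath_copy]
      exact ih (a + 1) (by omega)
    · rw [Walk.support_copy, support_segAux_mem]
      rintro ⟨j, h1, h2, hj⟩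
      have := congrArg rank hj
      simp only [rank_inl] at this
      omega

/-! ### the detour walk through ω_i -/

def detourWalk (hH : ∀ a : ℕ, (h : a < n) → H.Adj (Sum.inl ⟨a, by omega⟩) (Sum.inl ⟨a + 1, by omega⟩))
    {i : Fin n} (h1 : H.Adj (Sum.inl i.castSucc) (Sum.inr i))
    (h2 : H.Adj (Sum.inr i) (Sum.inl i.succ)) : H.Walk (src n) (dst n) :=
  ((segAux hH i.val 0 (by omega)).copy
      (show _ = src n from congrArg Sum.inl (Fin.ext (by simp [src]))) (congrArg Sum.inl (Fin.ext (by simp)))).append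
    (Walk.cons h1 (Walk.cons h2 ((segAux hH (n - (i.val + 1)) (i.val + 1) (by omega)).copy
      (congrArg Sum.inl (Fin.ext (by simp)))
      (show _ = dst n from congrArg Sum.inl (Fin.ext (by simp [dst, Fin.last]))))))

lemma walkLen_detourWalk (w' : Sym2 (CV n) → ℝ)
    (hH : ∀ a : ℕ, (h : a < n) → H.Adj (Sum.inl ⟨a, by omega⟩) (Sum.inl ⟨a + 1, by omega⟩))
    {i : Fin n} (h1 : H.Adj (Sum.inl i.castSucc) (Sum.inr i))
    (h2 : H.Adj (Sum.inr i) (Sum.inl i.succ)) :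
    walkLen w' (detourWalk hH h1 h2)
      = (∑ m ∈ Finset.Ico 0 i.val, ew w' m) + w' (d1E n i) + w' (d2E n i)
        + ∑ m ∈ Finset.Ico (i.val + 1) n, ew w' m := by
  rw [detourWalk, walkLen_append, walkLen_cons, walkLen_cons, walkLen_copy, walkLen_copy,
    walkLen_segAux, walkLen_segAux]
  rw [show 0 + i.val = i.val from by omega,
    show i.val + 1 + (n - (i.val + 1)) = n from by omega]
  have e1 : w' s(Sum.inl i.castSucc, Sum.inr i) = w' (d1E n i) := rfl
  have e2 : w' s(Sum.inr i, Sum.inl i.succ) = w' (d2E n i) := rfl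
  rw [e1, e2]
  ring

lemma mem_support_detourWalk
    (hH : ∀ a : ℕ, (h : a < n) → H.Adj (Sum.inl ⟨a, by omega⟩) (Sum.inl ⟨a + 1, by omega⟩))
    {i : Fin n} (h1 : H.Adj (Sum.inl i.castSucc) (Sum.inr i))
    (h2 : H.Adj (Sum.inr i) (Sum.inl i.succ)) :
    Sum.inr i ∈ (detourWalk hH h1 h2).support := by
  rw [detourWalk, Walk.support_append]
  apply List.mem_append_right
  show Sum.inr i ∈ Sum.inr i :: _
  exact List.mem_cons_self

lemma isPath_detourWalk
    (hH : ∀ a : ℕ, (h : a < n) → H.Adj (Sum.inl ⟨a, by omega⟩) (Sum.inl ⟨a + 1, by omega⟩))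
    {i : Fin n} (h1 : H.Adj (Sum.inl i.castSucc) (Sum.inr i))
    (h2 : H.Adj (Sum.inr i) (Sum.inl i.succ)) :
    (detourWalk hH h1 h2).IsPath := by
  have hp1supp : ∀ x ∈ (segAux hH i.val 0 (by omega)).support,
      ∃ j : Fin (n + 1), j.val ≤ i.val ∧ x = Sum.inl j := by
    intro x hx
    obtain ⟨j, -, hle, rfl⟩ := (support_segAux_mem hH i.val 0 (by omega) x).mp hx
    exact ⟨j, by omega, rfl⟩
  have hp2supp : ∀ x ∈ (segAux hH (n - (i.val + 1)) (i.val + 1) (by omega)).support,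
      ∃ j : Fin (n + 1), i.val + 1 ≤ j.val ∧ x = Sum.inl j := by
    intro x hx
    obtain ⟨j, hge, -, rfl⟩ := (support_segAux_mem hH (n - (i.val + 1)) (i.val + 1)
      (by omega) x).mp hx
    exact ⟨j, hge, rfl⟩
  rw [detourWalk, Walk.isPath_def, Walk.support_append]
  apply List.Nodup.append
  · rw [Walk.support_copy]
    exact (isPath_segAux hH i.val 0 (by omega)).support_nodup
  · show (Sum.inr i :: _).Nodup
    rw [List.nodup_cons]
    constructor
    · intro hmem
      rw [Walk.support_copy] at hmem
      obtain ⟨j, -, hj⟩ := hp2supp _ hmem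
      exact Sum.inr_ne_inl hj
    · rw [Walk.support_copy]
      exact (isPath_segAux hH (n - (i.val + 1)) (i.val + 1) (by omega)).support_nodup
  · intro x hx1 hx2
    rw [Walk.support_copy] at hx1
    obtain ⟨j, hj1, rfl⟩ := hp1supp x hx1
    rcases List.mem_cons.mp hx2 with h | h
    · exact Sum.inl_ne_inr h
    · rw [Walk.support_copy] at h
      obtain ⟨j', hj1', hj2'⟩ := hp2supp _ h
      rw [Sum.inl.injEq] at hj2'
      subst hj2'
      omega

end ChainAux

open ChainAux

/-- In the chain gadget with published weights `w'`, the minimum cost of an attack making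
the bottom path `p*` the shortest `s`–`t` path equals `∑_{i∈Y} ν_i`, where
`Y = {i : w'({u_{i-1},u_i}) ≥ w'({u_{i-1},ω_i}) + w'({ω_i,u_i})}`. -/
theorem stmt8 (n : ℕ) (w' c : Sym2 (CV n) → ℝ) (ν : Fin n → ℝ)
    (hw' : ∀ e, 0 < w' e) (hν : ∀ i, 0 < ν i)
    (hc1 : ∀ i, c (d1E n i) = ν i) (hc2 : ∀ i, c (d2E n i) = ν i)
    (Y : Finset (Fin n))
    (hY : ∀ i, i ∈ Y ↔ w' (d1E n i) + w' (d2E n i) ≤ w' (botE n i)) :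
    (∃ E', IsChainAttack n w' E' ∧ ∑ e ∈ E', c e = ∑ i ∈ Y, ν i) ∧
      ∀ E', IsChainAttack n w' E' → ∑ i ∈ Y, ν i ≤ ∑ e ∈ E', c e := by
  classical
  constructor
  · -- existence of an optimal attack
    refine ⟨Y.image (d1E n), ⟨?_, ?_, ?_⟩, ?_⟩
    · -- subset of edge set
      intro e he
      simp only [Finset.coe_image, Set.mem_image, Finset.mem_coe] at he
      obtain ⟨i, -, rfl⟩ := he
      rw [chainGraph, edgeSet_fromEdgeSet]
      refine ⟨⟨i, Or.inr (Or.inl rfl)⟩, ?_⟩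
      simp [d1E]
    · -- no bottom edge removed
      intro i hmem
      obtain ⟨k, -, hk⟩ := Finset.mem_image.mp hmem
      exact botE_ne_d1E hk.symm
    · -- every surviving detour path is strictly longer
      intro q hq hex
      obtain ⟨j, hj⟩ := hex
      have hH : (chainGraph n).deleteEdges ↑(Y.image (d1E n)) ≤ chainGraph n :=
        SimpleGraph.deleteEdges_le _
      obtain ⟨hd1, hd2⟩ := d_edges_mem hH q hq hj
      have hnotE : ∀ {e}, e ∈ q.edges → e ∉ Y.image (d1E n) := by
        intro e he hmem
        have h2 := q.edges_subset_edgeSet he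
        rw [edgeSet_deleteEdges] at h2
        exact h2.2 (Finset.mem_coe.mpr hmem)
      have hjY : j ∉ Y := fun hjy => hnotE hd1 (Finset.mem_image_of_mem _ hjy)
      have hnd := hq.edges_nodup
      have hlen : walkLen w' q = ∑ e ∈ q.edges.toFinset, w' e := by
        rw [walkLen]
        exact (List.sum_toFinset _ hnd).symm
      set tri : Fin n → Finset (Sym2 (CV n)) := fun i => {botE n i, d1E n i, d2E n i} with htri
      have tri_mem : ∀ (e : Sym2 (CV n)) (i : Fin n),
          e ∈ tri i ↔ (e = botE n i ∨ e = d1E n i ∨ e = d2E n i) := by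
        intro e i
        simp [htri]
      have tri_disj : ∀ {e : Sym2 (CV n)} {i i' : Fin n}, e ∈ tri i → e ∈ tri i' → i = i' := by
        intro e i i' h h'
        rw [tri_mem] at h h'
        rcases h with rfl | rfl | rfl
        · rcases h' with h' | h' | h'
          · exact botE_inj h'
          · exact absurd h' botE_ne_d1E
          · exact absurd h' botE_ne_d2E
        · rcases h' with h' | h' | h'
          · exact absurd h'.symm botE_ne_d1E
          · exact d1E_inj h'
          · exact absurd h' d1E_ne_d2E
        · rcases h' with h' | h' | h'
          · exact absurd h'.symm botE_ne_d2E
          · exact absurd h'.symm d1E_ne_d2E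
          · exact d2E_inj h'
      have hmemF : ∀ {e : Sym2 (CV n)}, e ∈ q.edges.toFinset → e ∈ (chainGraph n).edgeSet := by
        intro e he
        exact SimpleGraph.edgeSet_mono hH (q.edges_subset_edgeSet (List.mem_toFinset.mp he))
      have hsplit : ∑ i : Fin n, ∑ e ∈ q.edges.toFinset.filter (· ∈ tri i), w' e
          = ∑ e ∈ q.edges.toFinset, w' e := by
        simp only [Finset.sum_filter]
        rw [Finset.sum_comm]
        apply Finset.sum_congr rfl
        intro e he
        obtain ⟨i0, hi0⟩ := edge_cases (hmemF he)
        rw [Finset.sum_eq_single i0]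
        · rw [if_pos ((tri_mem e i0).mpr hi0)]
        · intro b _ hb
          exact if_neg (fun hbmem => hb (tri_disj hbmem ((tri_mem e i0).mpr hi0)))
        · intro h
          exact absurd (Finset.mem_univ i0) h
      have key : ∀ i : Fin n, w' (botE n i) ≤ ∑ e ∈ q.edges.toFinset.filter (· ∈ tri i), w' e := by
        intro i
        by_cases hbotF : botE n i ∈ q.edges.toFinset
        · have hsub : {botE n i} ⊆ q.edges.toFinset.filter (· ∈ tri i) := by
            intro e he
            rw [Finset.mem_singleton] at he
            subst he
            exact Finset.mem_filter.mpr ⟨hbotF, by rw [tri_mem]; exact Or.inl rfl⟩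
          calc w' (botE n i) = ∑ e ∈ ({botE n i} : Finset (Sym2 (CV n))), w' e := by simp
            _ ≤ _ := Finset.sum_le_sum_of_subset_of_nonneg hsub (fun e _ _ => (hw' e).le)
        · have h1 : d1E n i ∈ q.edges.toFinset := by
            rcases bot_or_d1_mem hH q i with h | h
            · exact absurd (List.mem_toFinset.mpr h) hbotF
            · exact List.mem_toFinset.mpr h
          have h2 : d2E n i ∈ q.edges.toFinset := by
            rcases bot_or_d2_mem hH q i with h | h
            · exact absurd (List.mem_toFinset.mpr h) hbotF
            · exact List.mem_toFinset.mpr h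
          have hiY : i ∉ Y :=
            fun hy => hnotE (List.mem_toFinset.mp h1) (Finset.mem_image_of_mem _ hy)
          have hlt : w' (botE n i) < w' (d1E n i) + w' (d2E n i) :=
            not_le.mp (fun hle => hiY ((hY i).mpr hle))
          have hsub : ({d1E n i, d2E n i} : Finset (Sym2 (CV n)))
              ⊆ q.edges.toFinset.filter (· ∈ tri i) := by
            intro e he
            rcases Finset.mem_insert.mp he with rfl | he
            · exact Finset.mem_filter.mpr ⟨h1, by rw [tri_mem]; exact Or.inr (Or.inl rfl)⟩
            · rw [Finset.mem_singleton] at he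
              subst he
              exact Finset.mem_filter.mpr ⟨h2, by rw [tri_mem]; exact Or.inr (Or.inr rfl)⟩
          calc w' (botE n i) ≤ w' (d1E n i) + w' (d2E n i) := hlt.le
            _ = ∑ e ∈ ({d1E n i, d2E n i} : Finset (Sym2 (CV n))), w' e :=
              (Finset.sum_pair d1E_ne_d2E).symm
            _ ≤ _ := Finset.sum_le_sum_of_subset_of_nonneg hsub (fun e _ _ => (hw' e).le)
      have keyj : w' (botE n j) < ∑ e ∈ q.edges.toFinset.filter (· ∈ tri j), w' e := by
        have h1 : d1E n j ∈ q.edges.toFinset := List.mem_toFinset.mpr hd1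
        have h2 : d2E n j ∈ q.edges.toFinset := List.mem_toFinset.mpr hd2
        have hlt : w' (botE n j) < w' (d1E n j) + w' (d2E n j) :=
          not_le.mp (fun hle => hjY ((hY j).mpr hle))
        have hsub : ({d1E n j, d2E n j} : Finset (Sym2 (CV n)))
            ⊆ q.edges.toFinset.filter (· ∈ tri j) := by
          intro e he
          rcases Finset.mem_insert.mp he with rfl | he
          · exact Finset.mem_filter.mpr ⟨h1, by rw [tri_mem]; exact Or.inr (Or.inl rfl)⟩
          · rw [Finset.mem_singleton] at he
            subst he
            exact Finset.mem_filter.mpr ⟨h2, by rw [tri_mem]; exact Or.inr (Or.inr rfl)⟩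
        calc w' (botE n j) < w' (d1E n j) + w' (d2E n j) := hlt
          _ = ∑ e ∈ ({d1E n j, d2E n j} : Finset (Sym2 (CV n))), w' e :=
            (Finset.sum_pair d1E_ne_d2E).symm
          _ ≤ _ := Finset.sum_le_sum_of_subset_of_nonneg hsub (fun e _ _ => (hw' e).le)
      rw [hlen, ← hsplit]
      exact Finset.sum_lt_sum (fun i _ => key i) ⟨j, Finset.mem_univ j, keyj⟩
    · -- the cost of this attack
      rw [Finset.sum_image (fun a _ b _ h => d1E_inj h)]
      exact Finset.sum_congr rfl (fun i _ => hc1 i)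
  · -- minimality
    intro E' hE'
    obtain ⟨hsub, hbot, hmain⟩ := hE'
    have hbotAdj : ∀ a : ℕ, (h : a < n) →
        ((chainGraph n).deleteEdges ↑E').Adj (Sum.inl ⟨a, by omega⟩) (Sum.inl ⟨a + 1, by omega⟩) := by
      intro a h
      rw [SimpleGraph.deleteEdges_adj]
      constructor
      · rw [chainGraph, fromEdgeSet_adj]
        refine ⟨⟨⟨a, h⟩, Or.inl (botE_mk a h).symm⟩, ?_⟩
        simp only [ne_eq, Sum.inl.injEq, Fin.mk.injEq]
        omega
      · intro hmem
        exact hbot ⟨a, h⟩ (by rw [← botE_mk a h] at hmem; exact Finset.mem_coe.mp hmem)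
    have hsumew : ∑ k : Fin n, w' (botE n k) = ∑ m ∈ Finset.Ico 0 n, ew w' m := by
      rw [← Finset.range_eq_Ico, ← Fin.sum_univ_eq_sum_range (fun m => ew w' m) n]
      apply Finset.sum_congr rfl
      intro k _
      rw [ew, dif_pos k.isLt]
    have hpick : ∀ i ∈ Y, d1E n i ∈ E' ∨ d2E n i ∈ E' := by
      intro i hiY
      by_contra hcon
      push_neg at hcon
      obtain ⟨hnd1, hnd2⟩ := hcon
      have adj1 : ((chainGraph n).deleteEdges ↑E').Adj (Sum.inl i.castSucc) (Sum.inr i) := by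
        rw [SimpleGraph.deleteEdges_adj]
        constructor
        · rw [chainGraph, fromEdgeSet_adj]
          exact ⟨⟨i, Or.inr (Or.inl rfl)⟩, by simp⟩
        · exact fun hmem => hnd1 (Finset.mem_coe.mp hmem)
      have adj2 : ((chainGraph n).deleteEdges ↑E').Adj (Sum.inr i) (Sum.inl i.succ) := by
        rw [SimpleGraph.deleteEdges_adj]
        constructor
        · rw [chainGraph, fromEdgeSet_adj]
          exact ⟨⟨i, Or.inr (Or.inr rfl)⟩, by simp⟩
        · exact fun hmem => hnd2 (Finset.mem_coe.mp hmem)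
      have hineq := hmain (detourWalk hbotAdj adj1 adj2) (isPath_detourWalk hbotAdj adj1 adj2)
        ⟨i, mem_support_detourWalk hbotAdj adj1 adj2⟩
      rw [walkLen_detourWalk, hsumew] at hineq
      have hdecomp : ∑ m ∈ Finset.Ico 0 n, ew w' m
          = (∑ m ∈ Finset.Ico 0 i.val, ew w' m) + ew w' i.val
            + ∑ m ∈ Finset.Ico (i.val + 1) n, ew w' m := by
        rw [← Finset.sum_Ico_consecutive (fun m => ew w' m)
          (Nat.zero_le i.val) (by omega : i.val ≤ n)]
        rw [Finset.sum_eq_sum_Ico_succ_bot (by omega : i.val < n)]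
        ring
      have hewi : ew w' i.val = w' (botE n i) := by
        rw [ew, dif_pos i.isLt]
      have hYle : w' (d1E n i) + w' (d2E n i) ≤ w' (botE n i) := (hY i).mp hiY
      rw [hdecomp, hewi] at hineq
      linarith
    have hcost : ∀ e ∈ E', ∃ k : Fin n, e = d1E n k ∨ e = d2E n k := by
      intro e he
      obtain ⟨k, hk | hk | hk⟩ := edge_cases (hsub (Finset.mem_coe.mpr he))
      · exact absurd (hk ▸ he) (hbot k)
      · exact ⟨k, Or.inl hk⟩
      · exact ⟨k, Or.inr hk⟩
    have hnonneg : ∀ e ∈ E', 0 ≤ c e := by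
      intro e he
      obtain ⟨k, hk | hk⟩ := hcost e he <;> rw [hk]
      · rw [hc1]; exact (hν k).le
      · rw [hc2]; exact (hν k).le
    set g : Fin n → Sym2 (CV n) := fun k => if d1E n k ∈ E' then d1E n k else d2E n k with hg
    have hgE : ∀ k ∈ Y, g k ∈ E' := by
      intro k hk
      rw [hg]
      by_cases h : d1E n k ∈ E'
      · simpa [h] using h
      · simp only [if_neg h]
        rcases hpick k hk with h' | h'
        · exact absurd h' h
        · exact h'
    have hgc : ∀ k, c (g k) = ν k := by
      intro k
      rw [hg]
      by_cases h : d1E n k ∈ E'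
      · simp [h, hc1]
      · simp [h, hc2]
    have hginj : ∀ a ∈ Y, ∀ b ∈ Y, g a = g b → a = b := by
      intro a _ b _ hab
      rw [hg] at hab
      dsimp only at hab
      by_cases ha : d1E n a ∈ E' <;> by_cases hb : d1E n b ∈ E' <;>
        simp only [if_pos, if_neg, ha, hb, if_true, if_false] at hab
      · exact d1E_inj hab
      · exact absurd hab d1E_ne_d2E
      · exact absurd hab.symm d1E_ne_d2E
      · exact d2E_inj hab
    calc ∑ i ∈ Y, ν i = ∑ i ∈ Y, c (g i) := by
          exact Finset.sum_congr rfl (fun i _ => (hgc i).symm)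
      _ = ∑ e ∈ Y.image g, c e := (Finset.sum_image hginj).symm
      _ ≤ ∑ e ∈ E', c e := by
          apply Finset.sum_le_sum_of_subset_of_nonneg
          · intro e he
            obtain ⟨k, hk, rfl⟩ := Finset.mem_image.mp he
            exact hgE k hk
          · intro e he _
            exact hnonneg e he
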